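/- Let w : [0,1] → ℝ be continuous on [0,1], differentiable on (0,1), strictly increasing, with w(0) = 0 and w(1) = 1. Suppose there exists x_m ∈ (0,1) such that w is strictly concave on [0, x_m] and strictly convex on [x_m, 1], w'(x_m) < 1, and w'(x) → ∞ as x → 0⁺ and as x → 1⁻. Then there exists a unique x_0 ∈ (0,1) with w(x_0) = x_0; moreover w(x) > x for all x ∈ (0, x_0) and w(x) < x for all x ∈ (x_0, 1). -/

import Mathlib

private lemma concave_secant' {f : ℝ → ℝ} {s : Set ℝ}
    (h : StrictConcaveOn ℝ s f) {x y z : ℝ}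
    (hx : x ∈ s) (hy : y ∈ s) (h1 : x < z) (h2 : z < y) :
    ((y - z)/(y - x)) * f x + ((z - x)/(y - x)) * f y < f z := by
  have h3 : (0:ℝ) < y - x := by linarith
  have ha : 0 < (y - z)/(y - x) := div_pos (by linarith) h3
  have hb : 0 < (z - x)/(y - x) := div_pos (by linarith) h3
  have hab : (y - z)/(y - x) + (z - x)/(y - x) = 1 := by
    rw [← add_div, div_eq_one_iff_eq h3.ne']; ring
  have key := h.2 hx hy (by intro hh; rw [hh] at h1; linarith) ha hb hab
  simp only [smul_eq_mul] at key
  have hz : (y - z)/(y - x) * x + (z - x)/(y - x) * y = z := by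
    field_simp; ring
  rwa [hz] at key

private lemma convex_secant' {f : ℝ → ℝ} {s : Set ℝ}
    (h : StrictConvexOn ℝ s f) {x y z : ℝ}
    (hx : x ∈ s) (hy : y ∈ s) (h1 : x < z) (h2 : z < y) :
    f z < ((y - z)/(y - x)) * f x + ((z - x)/(y - x)) * f y := by
  have h3 : (0:ℝ) < y - x := by linarith
  have ha : 0 < (y - z)/(y - x) := div_pos (by linarith) h3
  have hb : 0 < (z - x)/(y - x) := div_pos (by linarith) h3
  have hab : (y - z)/(y - x) + (z - x)/(y - x) = 1 := by
    rw [← add_div, div_eq_one_iff_eq h3.ne']; ring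
  have key := h.2 hx hy (by intro hh; rw [hh] at h1; linarith) ha hb hab
  simp only [smul_eq_mul] at key
  have hz : (y - z)/(y - x) * x + (z - x)/(y - x) * y = z := by
    field_simp; ring
  rwa [hz] at key

/-- An inverse-S-shaped probability weighting function
`w : [0,1] → ℝ` (continuous on `[0,1]`, differentiable on `(0,1)` with derivative `w'`,
strictly increasing, `w(0) = 0`, `w(1) = 1`, strictly concave on `[0, x_m]` and
strictly convex on `[x_m, 1]` for some `x_m ∈ (0,1)` with `w'(x_m) < 1`, and
`w'(x) → ∞` as `x → 0⁺` and as `x → 1⁻`) has a unique fixed point `x₀ ∈ (0,1)`;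
moreover `w(x) > x` on `(0, x₀)` and `w(x) < x` on `(x₀, 1)`. -/
theorem weighting_function_unique_fixed_point
    (w w' : ℝ → ℝ)
    (hcont : ContinuousOn w (Set.Icc 0 1))
    (hderiv : ∀ x ∈ Set.Ioo (0 : ℝ) 1, HasDerivAt w (w' x) x)
    (hmono : StrictMonoOn w (Set.Icc 0 1))
    (hw0 : w 0 = 0) (hw1 : w 1 = 1)
    (xm : ℝ) (hxm : xm ∈ Set.Ioo (0 : ℝ) 1)
    (hconc : StrictConcaveOn ℝ (Set.Icc 0 xm) w)
    (hconv : StrictConvexOn ℝ (Set.Icc xm 1) w)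
    (hxm1 : w' xm < 1)
    (hlim0 : Filter.Tendsto w' (nhdsWithin 0 (Set.Ioi 0)) Filter.atTop)
    (hlim1 : Filter.Tendsto w' (nhdsWithin 1 (Set.Iio 1)) Filter.atTop) :
    ∃ x₀ ∈ Set.Ioo (0 : ℝ) 1, w x₀ = x₀ ∧
      (∀ x ∈ Set.Ioo (0 : ℝ) x₀, x < w x) ∧
      (∀ x ∈ Set.Ioo x₀ (1 : ℝ), w x < x) ∧
      (∀ y ∈ Set.Ioo (0 : ℝ) 1, w y = y → y = x₀) := by
  obtain ⟨hxm0, hxmlt1⟩ := hxm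
  -- a point p near 0 with w p > p
  have near0 : ∃ p ∈ Set.Ioo (0:ℝ) xm, p < w p := by
    have h1 : ∀ᶠ x in nhdsWithin 0 (Set.Ioi 0), 1 < w' x :=
      hlim0.eventually (Filter.eventually_gt_atTop 1)
    rw [eventually_nhdsWithin_iff, Metric.eventually_nhds_iff] at h1
    obtain ⟨δ, hδpos, hδ⟩ := h1
    set p := min (δ/2) (xm/2) with hpdef
    have hp0 : (0:ℝ) < p := lt_min (by linarith) (by linarith)
    have hpxm : p < xm := (min_le_right _ _).trans_lt (by linarith)
    have hp1 : p < 1 := hpxm.trans hxmlt1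
    obtain ⟨c, hc, hcd⟩ := exists_hasDerivAt_eq_slope w w' hp0
      (hcont.mono (Set.Icc_subset_Icc le_rfl hp1.le))
      (fun x hx => hderiv x ⟨hx.1, hx.2.trans hp1⟩)
    have hcδ : dist c 0 < δ := by
      rw [Real.dist_eq, sub_zero, abs_of_pos hc.1]
      have h4 : c < p := hc.2
      have h5 : p ≤ δ/2 := min_le_left _ _
      linarith
    have h1c : 1 < w' c := hδ hcδ hc.1
    rw [hcd, hw0, sub_zero, sub_zero] at h1c
    have := (lt_div_iff₀ hp0).mp h1c
    exact ⟨p, ⟨hp0, hpxm⟩, by linarith⟩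
  -- a point q near 1 with w q < q
  have near1 : ∃ q ∈ Set.Ioo xm (1:ℝ), w q < q := by
    have h1 : ∀ᶠ x in nhdsWithin 1 (Set.Iio 1), 1 < w' x :=
      hlim1.eventually (Filter.eventually_gt_atTop 1)
    rw [eventually_nhdsWithin_iff, Metric.eventually_nhds_iff] at h1
    obtain ⟨δ, hδpos, hδ⟩ := h1
    set q := max (1 - δ/2) ((xm+1)/2) with hqdef
    have hq1 : q < 1 := max_lt (by linarith) (by linarith)
    have hqxm : xm < q := lt_of_lt_of_le (by linarith) (le_max_right _ _)
    have hq0 : (0:ℝ) < q := hxm0.trans hqxm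
    obtain ⟨c, hc, hcd⟩ := exists_hasDerivAt_eq_slope w w' hq1
      (hcont.mono (Set.Icc_subset_Icc hq0.le le_rfl))
      (fun x hx => hderiv x ⟨hq0.trans hx.1, hx.2⟩)
    have hcδ : dist c 1 < δ := by
      rw [Real.dist_eq, abs_of_neg (by linarith [hc.2] : c - 1 < 0)]
      have h5 : 1 - δ/2 ≤ q := le_max_left _ _
      have h4 : q < c := hc.1
      linarith
    have h1c : 1 < w' c := hδ hcδ hc.2
    rw [hcd, hw1] at h1c
    have := (lt_div_iff₀ (by linarith : (0:ℝ) < 1 - q)).mp h1c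
    exact ⟨q, ⟨hqxm, hq1⟩, by linarith⟩
  obtain ⟨p, hp, hwp⟩ := near0
  obtain ⟨q, hq, hwq⟩ := near1
  -- the key existence with sign structure
  have key : ∃ a ∈ Set.Ioo (0:ℝ) 1, w a = a ∧
      (∀ x ∈ Set.Ioo (0:ℝ) a, x < w x) ∧ (∀ x ∈ Set.Ioo a (1:ℝ), w x < x) := by
    rcases lt_trichotomy (w xm) xm with hlt | heq | hgt
    · -- w xm < xm : fixed point in (p, xm)
      have hgc : ContinuousOn (fun x => w x - x) (Set.Icc p xm) :=
        (hcont.mono (Set.Icc_subset_Icc hp.1.le hxmlt1.le)).sub continuousOn_id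
      have hmem : (0:ℝ) ∈ Set.Ioo (w xm - xm) (w p - p) := ⟨by linarith, by linarith⟩
      obtain ⟨a, ha, hfa⟩ := intermediate_value_Ioo' hp.2.le hgc hmem
      have hwa : w a = a := by simpa [sub_eq_zero] using hfa
      have ha0 : 0 < a := hp.1.trans ha.1
      have haxm : a < xm := ha.2
      have ha1 : a < 1 := haxm.trans hxmlt1
      refine ⟨a, ⟨ha0, ha1⟩, hwa, ?_, ?_⟩
      · intro x hx
        have hsec := concave_secant' hconc (x := 0) (y := a) (z := x)
          ⟨le_rfl, hxm0.le⟩ ⟨ha0.le, haxm.le⟩ hx.1 hx.2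
        rw [hw0, hwa] at hsec
        have h5 : ((a - x)/(a - 0)) * 0 + ((x - 0)/(a - 0)) * a = x := by
          simp only [sub_zero, mul_zero, zero_add]; exact div_mul_cancel₀ _ ha0.ne'
        linarith
      · intro x hx
        rcases lt_trichotomy x xm with hxlt | hxeq | hxgt
        · -- a < x < xm : concave secant at a between 0 and x
          have hx0 : (0:ℝ) < x := ha0.trans hx.1
          have hsec := concave_secant' hconc (x := 0) (y := x) (z := a)
            ⟨le_rfl, hxm0.le⟩ ⟨hx0.le, hxlt.le⟩ ha0 hx.1
          rw [hw0] at hsec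
          have h5 : ((x - a)/(x - 0)) * 0 + ((a - 0)/(x - 0)) * w x = a * w x / x := by
            ring
          rw [h5, hwa] at hsec
          have h7 : a * w x < a * x := (div_lt_iff₀ hx0).mp hsec
          exact lt_of_mul_lt_mul_left h7 ha0.le
        · subst hxeq; exact hlt
        · -- xm < x < 1 : convex secant, using w xm < xm
          have hsec := convex_secant' hconv (x := xm) (y := 1) (z := x)
            ⟨le_rfl, hxmlt1.le⟩ ⟨hxmlt1.le, le_rfl⟩ hxgt hx.2
          rw [hw1] at hsec
          have h1xm : (0:ℝ) < 1 - xm := by linarith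
          have h1x : (0:ℝ) < 1 - x := by linarith [hx.2]
          have hfac : ((1 - x)/(1 - xm)) * w xm < ((1 - x)/(1 - xm)) * xm :=
            mul_lt_mul_of_pos_left hlt (div_pos h1x h1xm)
          have heqx : ((1 - x)/(1 - xm)) * xm + ((x - xm)/(1 - xm)) * 1 = x := by
            field_simp; ring
          linarith
    · -- w xm = xm
      refine ⟨xm, ⟨hxm0, hxmlt1⟩, heq, ?_, ?_⟩
      · intro x hx
        have hsec := concave_secant' hconc (x := 0) (y := xm) (z := x)
          ⟨le_rfl, hxm0.le⟩ ⟨hxm0.le, le_rfl⟩ hx.1 hx.2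
        rw [hw0, heq] at hsec
        have h5 : ((xm - x)/(xm - 0)) * 0 + ((x - 0)/(xm - 0)) * xm = x := by
          simp only [sub_zero, mul_zero, zero_add]; exact div_mul_cancel₀ _ hxm0.ne'
        linarith
      · intro x hx
        have hsec := convex_secant' hconv (x := xm) (y := 1) (z := x)
          ⟨le_rfl, hxmlt1.le⟩ ⟨hxmlt1.le, le_rfl⟩ hx.1 hx.2
        rw [hw1, heq] at hsec
        have h1xm : (0:ℝ) < 1 - xm := by linarith
        have h5 : ((1 - x)/(1 - xm)) * xm + ((x - xm)/(1 - xm)) * 1 = x := by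
          field_simp; ring
        linarith
    · -- w xm > xm : fixed point in (xm, q)
      have hgc : ContinuousOn (fun x => w x - x) (Set.Icc xm q) :=
        (hcont.mono (Set.Icc_subset_Icc hxm0.le hq.2.le)).sub continuousOn_id
      have hmem : (0:ℝ) ∈ Set.Ioo (w q - q) (w xm - xm) := ⟨by linarith, by linarith⟩
      obtain ⟨a, ha, hfa⟩ := intermediate_value_Ioo' hq.1.le hgc hmem
      have hwa : w a = a := by simpa [sub_eq_zero] using hfa
      have haxm : xm < a := ha.1
      have ha0 : 0 < a := hxm0.trans haxm
      have ha1 : a < 1 := ha.2.trans hq.2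
      refine ⟨a, ⟨ha0, ha1⟩, hwa, ?_, ?_⟩
      · intro x hx
        rcases lt_trichotomy x xm with hxlt | hxeq | hxgt
        · -- 0 < x < xm : contradiction argument via concavity
          by_contra hcon
          push_neg at hcon
          have hsec := concave_secant' hconc (x := 0) (y := xm) (z := x)
            ⟨le_rfl, hxm0.le⟩ ⟨hxm0.le, le_rfl⟩ hx.1 hxlt
          rw [hw0] at hsec
          have hx0 : (0:ℝ) < x := hx.1
          have h5 : ((xm - x)/(xm - 0)) * 0 + ((x - 0)/(xm - 0)) * w xm
              = x * w xm / xm := by ring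
          rw [h5] at hsec
          have h6 : x * w xm / xm < x := lt_of_lt_of_le hsec hcon
          have h7 : x * w xm < x * xm := (div_lt_iff₀ hxm0).mp h6
          have := lt_of_mul_lt_mul_left h7 hx0.le
          linarith
        · subst hxeq; exact hgt
        · -- xm < x < a : convex secant at a between x and 1
          have h1x : (0:ℝ) < 1 - x := by linarith [hx.2, ha1]
          have hsec := convex_secant' hconv (x := x) (y := 1) (z := a)
            ⟨hxgt.le, (hx.2.trans ha1).le⟩ ⟨hxmlt1.le, le_rfl⟩ hx.2 ha1
          rw [hw1, hwa] at hsec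
          have heqd : ((1 - a)/(1 - x)) * w x + ((a - x)/(1 - x)) * 1
              = ((1 - a) * w x + (a - x))/(1 - x) := by field_simp
          rw [heqd] at hsec
          have h6 : a * (1 - x) < (1 - a) * w x + (a - x) := (lt_div_iff₀ h1x).mp hsec
          have h7 : (1 - a) * x < (1 - a) * w x := by nlinarith
          exact lt_of_mul_lt_mul_left h7 (by linarith)
      · intro x hx
        have hsec := convex_secant' hconv (x := a) (y := 1) (z := x)
          ⟨haxm.le, ha1.le⟩ ⟨hxmlt1.le, le_rfl⟩ hx.1 hx.2
        rw [hw1, hwa] at hsec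
        have h1a : (0:ℝ) < 1 - a := by linarith
        have h5 : ((1 - x)/(1 - a)) * a + ((x - a)/(1 - a)) * 1 = x := by
          field_simp; ring
        linarith
  obtain ⟨a, ha01, hwa, hpos, hneg⟩ := key
  refine ⟨a, ha01, hwa, hpos, hneg, ?_⟩
  intro y hy hwy
  rcases lt_trichotomy y a with h | h | h
  · exact absurd hwy (by have := hpos y ⟨hy.1, h⟩; linarith)
  · exact h
  · exact absurd hwy (by have := hneg y ⟨h, hy.2⟩; linarith)
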